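/- Let K be a commutative semiring and let G be a complete ordered nondeterministic edge-valued decision diagram over K on variables x_1 ≺ ⋯ ≺ x_n representing the function f : {0,1}^n → K. Then there exists a tensor train on n Boolean variables over K representing f whose bond dimension χ_r, for each r ∈ {1,…,n}, equals the number of nodes of G labeled x_r (and χ_{n+1} = 1); concretely, enumerating the nodes labeled x_r as v^{(r)}_1,…,v^{(r)}_{χ_r}, the tensor entries are A(r)[s,t,b] = w(e) if there is a b-edge e from v^{(r)}_s to v^{(r+1)}_t and A(r)[s,t,b] = 0 otherwise. -/

import Mathlib

/-! ## Tensor trains -/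

/-- `ttSuffix n χ A α k s` is the `(s,0)` entry of the matrix product
`M_{n-k}(α (n-k)) ⋯ M_{n-1}(α (n-1))` of the last `k` matrices of the tensor train
(0-indexed variables `0,…,n-1`, bond dimensions `χ 0, …, χ n`). -/
def ttSuffix {K : Type} [CommSemiring K] (n : ℕ) (χ : ℕ → ℕ)
    (A : ℕ → ℕ → ℕ → Bool → K) (α : ℕ → Bool) : ℕ → ℕ → K
  | 0, s => if s = 0 then 1 else 0
  | k + 1, s =>
      ∑ t ∈ Finset.range (χ (n - k)),
        A (n - (k + 1)) s t (α (n - (k + 1))) * ttSuffix n χ A α k t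

/-- The pseudo-Boolean function represented by a tensor train: the unique entry of
`M_0(α 0) ⋯ M_{n-1}(α (n-1))`. -/
def ttFun {K : Type} [CommSemiring K] (n : ℕ) (χ : ℕ → ℕ)
    (A : ℕ → ℕ → ℕ → Bool → K) (α : ℕ → Bool) : K :=
  ttSuffix n χ A α n 0

/-! ## Nondeterministic edge-valued decision diagrams -/

/-- An ordered nondeterministic edge-valued decision diagram over `K` on the (0-indexed)
variables `x_0 ≺ ⋯ ≺ x_{n-1}`.  Nodes carry a `level`: a node of level `r < n` is labeled with
the variable `x_r`; the sink is the unique node of level `n` and is unlabeled.  Levels strictly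
increase along edges (so the diagram is an ordered, read-once DAG), the source is the unique
node without incoming edges and the sink the unique node without outgoing edges.  Each edge
carries a Boolean label and a weight in `K`. -/
structure NdEVDD (K : Type) (n : ℕ) where
  V : Type
  [fintypeV : Fintype V]
  [decEqV : DecidableEq V]
  source : V
  sink : V
  level : V → ℕ
  edge : V → Bool → V → Bool
  w : V → Bool → V → K
  sink_level : level sink = n
  nonsink_level : ∀ v, v ≠ sink → level v < n
  edge_level : ∀ u b v, edge u b v = true → level u < level v
  source_no_in : ∀ u b, edge u b source = false
  sink_no_out : ∀ b v, edge sink b v = false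
  single_source : ∀ v, v ≠ source → ∃ u b, edge u b v = true
  single_sink : ∀ v, v ≠ sink → ∃ b u, edge v b u = true

attribute [instance] NdEVDD.fintypeV NdEVDD.decEqV

namespace NdEVDD

variable {K : Type} {n : ℕ}

/-- `D.IsPathFrom α v p`: `p` is a path from `v` to the sink that leaves every node labeled
`x_i` along an edge labeled `α i`. -/
def IsPathFrom (D : NdEVDD K n) (α : ℕ → Bool) : D.V → List (Bool × D.V) → Prop
  | v, [] => v = D.sink
  | v, (b, u) :: p => D.edge v b u = true ∧ b = α (D.level v) ∧ IsPathFrom D α u p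

/-- The product of the weights of the edges of a path. -/
def pathWeight [CommSemiring K] (D : NdEVDD K n) : D.V → List (Bool × D.V) → K
  | _, [] => 1
  | v, (b, u) :: p => D.w v b u * pathWeight D u p

/-- The function represented by the node `v` of the diagram: the sum, over all paths from `v`
to the sink consistent with the assignment `α`, of the product of the edge weights
(`0` if there is no such path). -/
noncomputable def nodeFun [CommSemiring K] (D : NdEVDD K n) (α : ℕ → Bool) (v : D.V) : K :=
  ∑ᶠ (p : List (Bool × D.V)) (_ : D.IsPathFrom α v p), D.pathWeight v p

/-- The function represented by the diagram: the path-sum from the source. -/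
noncomputable def eval [CommSemiring K] (D : NdEVDD K n) (α : ℕ → Bool) : K :=
  D.nodeFun α D.source

/-- A diagram is complete when every source-to-sink path reads every variable; with levels
this means the source is at level `0` and every edge advances the level by exactly one. -/
def Complete (D : NdEVDD K n) : Prop :=
  D.level D.source = 0 ∧ ∀ u b v, D.edge u b v = true → D.level v = D.level u + 1

/-- A diagram is deterministic when every node has at most one outgoing `0`-edge and at most
one outgoing `1`-edge. -/
def Deterministic (D : NdEVDD K n) : Prop :=
  ∀ u b v₁ v₂, D.edge u b v₁ = true → D.edge u b v₂ = true → v₁ = v₂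

/-- The number of edges of the diagram. -/
def edgeCount (D : NdEVDD K n) : ℕ :=
  (Finset.univ.filter fun t : D.V × Bool × D.V => D.edge t.1 t.2.1 t.2.2 = true).card

end NdEVDD
/-! ## Vtrees -/

/-- A vtree: a rooted binary tree whose leaves are labeled with (distinct) variables. -/
inductive VTree : Type
  | leaf (x : ℕ)
  | node (l r : VTree)

namespace VTree

/-- The set of variables on the leaves of a vtree. -/
def vars : VTree → Set ℕ
  | .leaf x => {x}
  | .node l r => l.vars ∪ r.vars

/-- The list of leaf labels, read from left to right. -/
def leaves : VTree → List ℕ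
  | .leaf x => [x]
  | .node l r => l.leaves ++ r.leaves

/-- `s.Subtree t` : `s` is a (not necessarily proper) subtree of `t`. -/
def Subtree (s : VTree) : VTree → Prop
  | .leaf x => s = .leaf x
  | .node l r => s = .node l r ∨ s.Subtree l ∨ s.Subtree r

end VTree

/-! ## (+,×)-circuits -/

/-- The kind of a circuit gate: an input `1[x = b]`, a `+` gate, or a `×` gate. -/
inductive GateKind : Type
  | input (x : ℕ) (b : Bool)
  | plus
  | times
deriving DecidableEq

/-- A `(+,×)`-circuit over a (commutative) semiring `K`: a finite DAG (acyclicity is witnessed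
by a rank function decreasing from a gate to its children) whose sources are labeled with
indicator inputs `1[x = b]`, whose internal gates are `+` or `×` gates, and where each edge
from a child into a `+` gate carries a weight (recorded by `weight g g'` for the edge from
`g'` into `g`). -/
structure Circuit (K : Type) where
  Gate : Type
  [fintypeGate : Fintype Gate]
  [decEqGate : DecidableEq Gate]
  kind : Gate → GateKind
  child : Gate → Gate → Bool
  weight : Gate → Gate → K
  rank : Gate → ℕ
  child_rank : ∀ g g', child g g' = true → rank g' < rank g
  input_no_child : ∀ g x b, kind g = .input x b → ∀ g', child g g' = false

attribute [instance] Circuit.fintypeGate Circuit.decEqGate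

namespace Circuit

variable {K : Type}

/-- The value computed by gate `g` on the assignment `α` : inputs `1[x = b]` evaluate to `1`
iff `α x = b`, a `+` gate computes the weighted sum of its children, and a `×` gate computes
the product of its children. -/
def eval [CommSemiring K] (C : Circuit K) (α : ℕ → Bool) (g : C.Gate) : K :=
  match C.kind g with
  | GateKind.input x b => if α x = b then 1 else 0
  | GateKind.plus =>
      ∑ g' : C.Gate, if h : C.child g g' = true then C.weight g g' * C.eval α g' else 0
  | GateKind.times =>
      ∏ g' : C.Gate, if h : C.child g g' = true then C.eval α g' else 1
termination_by C.rank g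
decreasing_by
  all_goals exact C.child_rank g g' h

/-- Reachability along child edges. -/
def Reaches (C : Circuit K) : C.Gate → C.Gate → Prop :=
  Relation.ReflTransGen fun a b => C.child a b = true

/-- `var(g)`: the set of variables appearing on inputs below `g`. -/
def varsBelow (C : Circuit K) (g : C.Gate) : Set ℕ :=
  {x | ∃ g' b, C.Reaches g g' ∧ C.kind g' = GateKind.input x b}

/-- A structuring of the circuit `C` by the vtree `T`: a map `φ` from gates to (subtrees of)
`T` such that `var(g) ⊆ var(φ g)`, every `×` gate has exactly two children mapped into the
left and right subtrees of `φ g` respectively, and every `+` gate has its children mapped to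
`φ g` or its descendants.  A circuit admitting such a structuring is
structured-decomposable. -/
structure StructuredBy (C : Circuit K) (T : VTree) where
  φ : C.Gate → VTree
  φ_subtree : ∀ g, (φ g).Subtree T
  φ_vars : ∀ g, C.varsBelow g ⊆ (φ g).vars
  plus_structured : ∀ g g', C.kind g = GateKind.plus → C.child g g' = true →
    (φ g').Subtree (φ g)
  times_structured : ∀ g, C.kind g = GateKind.times →
    ∃ l r gl gr, φ g = VTree.node l r ∧ gl ≠ gr ∧
      (∀ g', C.child g g' = true ↔ (g' = gl ∨ g' = gr)) ∧
      (φ gl).Subtree l ∧ (φ gr).Subtree r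

/-- A circuit is deterministic when for every `+` gate and every two distinct children the
product of the corresponding weighted summands is the zero function. -/
def Deterministic [CommSemiring K] (C : Circuit K) : Prop :=
  ∀ g g₁ g₂, C.kind g = GateKind.plus → C.child g g₁ = true → C.child g g₂ = true →
    g₁ ≠ g₂ → ∀ α, (C.weight g g₁ * C.eval α g₁) * (C.weight g g₂ * C.eval α g₂) = 0

/-- A structured-decomposable circuit is a decision circuit when every `+` gate has the form
`g₀·1[x = 0] + g₁·1[x = 1]` for some variable `x`: its children are exactly two `×` gates,
one having the input `1[x = 0]` as one of its two children and the other having the input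
`1[x = 1]` as one of its two children. -/
def Decision (C : Circuit K) : Prop :=
  ∀ g, C.kind g = GateKind.plus →
    ∃ x m₀ m₁ g₀ g₁ i₀ i₁,
      m₀ ≠ m₁ ∧
      (∀ g', C.child g g' = true ↔ (g' = m₀ ∨ g' = m₁)) ∧
      C.kind m₀ = GateKind.times ∧ C.kind m₁ = GateKind.times ∧
      C.kind i₀ = GateKind.input x false ∧ C.kind i₁ = GateKind.input x true ∧
      g₀ ≠ i₀ ∧ g₁ ≠ i₁ ∧
      (∀ c, C.child m₀ c = true ↔ (c = g₀ ∨ c = i₀)) ∧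
      (∀ c, C.child m₁ c = true ↔ (c = g₁ ∨ c = i₁))

end Circuit

/-! ## Tree tensor networks -/

/-- A (binary) tree tensor network over `K`, indexed by the dimension `d` of its root:
a leaf labeled with the variable `x` carries a `2 × d` tensor, and an internal node with
children of dimensions `dl` and `dr` carries a `dl × dr × d` tensor. -/
inductive TTN (K : Type) : ℕ → Type
  | leaf (x : ℕ) {d : ℕ} (A : Bool → Fin d → K) : TTN K d
  | node {dl dr d : ℕ} (l : TTN K dl) (r : TTN K dr)
      (A : Fin dl → Fin dr → Fin d → K) : TTN K d

namespace TTN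

variable {K : Type}

/-- The `d` pseudo-Boolean functions `Â(v)[·,k]` represented by a TTN, evaluated on a (total)
assignment `α` of the Boolean variables. -/
def eval [CommSemiring K] : ∀ {d : ℕ}, TTN K d → (ℕ → Bool) → Fin d → K
  | _, .leaf x A, α, k => A (α x) k
  | _, @TTN.node _ dl dr _ l r A, α, k =>
      ∑ i : Fin dl, ∑ j : Fin dr, A i j k * (eval l α i * eval r α j)

/-- The underlying vtree (tree shape with leaf labels) of a TTN. -/
def shape : ∀ {d : ℕ}, TTN K d → VTree
  | _, .leaf x _ => VTree.leaf x
  | _, .node l r _ => VTree.node l.shape r.shape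

/-- `TTN.Sub u t` : the node `u` is a (not necessarily proper) subtree of the TTN `t`. -/
inductive Sub : ∀ {d₁ d₂ : ℕ}, TTN K d₁ → TTN K d₂ → Prop
  | refl {d} (t : TTN K d) : Sub t t
  | left {d₀ dl dr d} (s : TTN K d₀) (l : TTN K dl) (r : TTN K dr)
      (A : Fin dl → Fin dr → Fin d → K) : Sub s l → Sub s (TTN.node l r A)
  | right {d₀ dl dr d} (s : TTN K d₀) (l : TTN K dl) (r : TTN K dr)
      (A : Fin dl → Fin dr → Fin d → K) : Sub s r → Sub s (TTN.node l r A)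

/-- A TTN is deterministic when at every internal node `v`, for every `k` and every two
distinct nonzero entries `A(v)[i₁,j₁,k]`, `A(v)[i₂,j₂,k]`, the entrywise product of the
`i₁`-th and `i₂`-th represented functions of the left child vanishes, or that of the
`j₁`-th and `j₂`-th represented functions of the right child vanishes. -/
def Deterministic [CommSemiring K] : ∀ {d : ℕ}, TTN K d → Prop
  | _, .leaf _ _ => True
  | _, @TTN.node _ dl dr d l r A =>
      Deterministic l ∧ Deterministic r ∧
      ∀ (k : Fin d) (i₁ i₂ : Fin dl) (j₁ j₂ : Fin dr),
        (i₁, j₁) ≠ (i₂, j₂) → A i₁ j₁ k ≠ 0 → A i₂ j₂ k ≠ 0 →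
        (∀ α, eval l α i₁ * eval l α i₂ = 0) ∨ (∀ α, eval r α j₁ * eval r α j₂ = 0)

/-- The local condition of a decision TTN at an internal node with children `l`, `r` and
tensor `A` (following the case distinction on which children are leaves). -/
def DecisionNodeCond [CommSemiring K] :
    ∀ {dl dr d : ℕ}, TTN K dl → TTN K dr → (Fin dl → Fin dr → Fin d → K) → Prop
  | _, _, _, .leaf _ _, .leaf _ _, _ => True
  | _, _, _, .node _ _ _, .node _ _ _, A =>
      ∀ k i₁ j₁ i₂ j₂, A i₁ j₁ k ≠ 0 → A i₂ j₂ k ≠ 0 → (i₁, j₁) = (i₂, j₂)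
  | _, _, _, .node _ _ _, .leaf _ Ar, A =>
      ∀ k, ∃ j₀ k₀ j₁ k₁, ∀ i j, A i j k ≠ 0 →
        ((i, j) = (j₀, k₀) ∧ Ar true k₀ = 0) ∨ ((i, j) = (j₁, k₁) ∧ Ar false k₁ = 0)
  | _, _, _, .leaf _ Al, .node _ _ _, A =>
      ∀ k, ∃ j₀ k₀ j₁ k₁, ∀ i j, A i j k ≠ 0 →
        ((i, j) = (k₀, j₀) ∧ Al true k₀ = 0) ∨ ((i, j) = (k₁, j₁) ∧ Al false k₁ = 0)

/-- A decision TTN: at every leaf each column of the tensor has a zero in the `x = 0` row or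
in the `x = 1` row; at every internal node both of whose children are internal every slice
`A(v)[·,·,k]` has at most one nonzero entry; and at every internal node with exactly one leaf
child every slice has at most two nonzero entries whose leaf-side columns vanish at `x = 1`
and at `x = 0` respectively. -/
def Decision [CommSemiring K] : ∀ {d : ℕ}, TTN K d → Prop
  | _, .leaf _ A => ∀ i, A false i = 0 ∨ A true i = 0
  | _, .node l r A => Decision l ∧ Decision r ∧ DecisionNodeCond l r A

end TTN

/-! ### Auxiliary material for Statement 2 -/

namespace NdEVDD

variable {K : Type} {n : ℕ}

lemma isPathFrom_length (D : NdEVDD K n) (α : ℕ → Bool) :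
    ∀ (p : List (Bool × D.V)) (v : D.V), D.IsPathFrom α v p → p.length + D.level v ≤ n := by
  intro p
  induction p with
  | nil =>
      intro v h
      have : v = D.sink := h
      subst this
      simp [D.sink_level]
  | cons e p ih =>
      rintro v h
      obtain ⟨b, u⟩ := e
      obtain ⟨he, hb, hp⟩ := h
      have h1 := ih u hp
      have h2 := D.edge_level v b u he
      simp only [List.length_cons]
      omega

lemma pathsFinite (D : NdEVDD K n) (α : ℕ → Bool) (v : D.V) :
    {p | D.IsPathFrom α v p}.Finite := by
  apply (List.finite_length_le (Bool × D.V) n).subset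
  intro p hp
  have := D.isPathFrom_length α p v hp
  simp only [Set.mem_setOf_eq]
  omega

/-- The finite set of `α`-consistent paths from `v` to the sink. -/
noncomputable def pathFinset (D : NdEVDD K n) (α : ℕ → Bool) (v : D.V) :
    Finset (List (Bool × D.V)) :=
  (D.pathsFinite α v).toFinset

lemma nodeFun_eq_sum [CommSemiring K] (D : NdEVDD K n) (α : ℕ → Bool) (v : D.V) :
    D.nodeFun α v = ∑ p ∈ D.pathFinset α v, D.pathWeight v p := by
  rw [pathFinset, ← finsum_mem_coe_finset, Set.Finite.coe_toFinset]
  rfl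

lemma nodeFun_sink [CommSemiring K] (D : NdEVDD K n) (α : ℕ → Bool) :
    D.nodeFun α D.sink = 1 := by
  rw [nodeFun_eq_sum]
  have h : D.pathFinset α D.sink = {[]} := by
    ext p
    simp only [pathFinset, Set.Finite.mem_toFinset, Set.mem_setOf_eq, Finset.mem_singleton]
    constructor
    · intro hp
      match p with
      | [] => rfl
      | (b, u) :: p' =>
          obtain ⟨he, -, -⟩ := hp
          rw [D.sink_no_out b u] at he
          exact absurd he (by simp)
    · rintro rfl
      exact rfl
  rw [h, Finset.sum_singleton]
  rfl

lemma nodeFun_succ [CommSemiring K] (D : NdEVDD K n) (α : ℕ → Bool) {v : D.V}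
    (hv : v ≠ D.sink) :
    D.nodeFun α v = ∑ u : D.V, if D.edge v (α (D.level v)) u = true
      then D.w v (α (D.level v)) u * D.nodeFun α u else 0 := by
  classical
  set b := α (D.level v) with hb
  have hset : D.pathFinset α v =
      Finset.univ.biUnion (fun u => if D.edge v b u = true
        then (D.pathFinset α u).image (List.cons (b, u)) else ∅) := by
    ext p
    simp only [pathFinset, Set.Finite.mem_toFinset, Set.mem_setOf_eq, Finset.mem_biUnion,
      Finset.mem_univ, true_and]
    constructor
    · intro hp
      match p with
      | [] => exact absurd hp hv
      | (b', u) :: p' =>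
          obtain ⟨he, hb', hp'⟩ := hp
          subst hb'
          refine ⟨u, ?_⟩
          rw [if_pos he]
          exact Finset.mem_image_of_mem _ ((Set.Finite.mem_toFinset _).mpr hp')
    · rintro ⟨u, hu⟩
      by_cases he : D.edge v b u = true
      · rw [if_pos he] at hu
        obtain ⟨p', hp', rfl⟩ := Finset.mem_image.mp hu
        exact ⟨he, rfl, (Set.Finite.mem_toFinset _).mp hp'⟩
      · rw [if_neg he] at hu
        exact absurd hu (Finset.notMem_empty _)
  have hdisj : (↑(Finset.univ : Finset D.V) : Set D.V).PairwiseDisjoint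
      (fun u => if D.edge v b u = true
        then (D.pathFinset α u).image (List.cons (b, u)) else ∅) := by
    intro u₁ _ u₂ _ hne
    apply Finset.disjoint_left.mpr
    intro p hp₁ hp₂
    dsimp only at hp₁ hp₂
    by_cases h1 : D.edge v b u₁ = true
    · by_cases h2 : D.edge v b u₂ = true
      · rw [if_pos h1] at hp₁
        rw [if_pos h2] at hp₂
        obtain ⟨q₁, -, rfl⟩ := Finset.mem_image.mp hp₁
        obtain ⟨q₂, -, he⟩ := Finset.mem_image.mp hp₂
        exact hne (by injection he with h _; exact (Prod.ext_iff.mp h).2.symm)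
      · rw [if_neg h2] at hp₂; exact absurd hp₂ (Finset.notMem_empty _)
    · rw [if_neg h1] at hp₁; exact absurd hp₁ (Finset.notMem_empty _)
  rw [nodeFun_eq_sum, hset, Finset.sum_biUnion hdisj]
  apply Finset.sum_congr rfl
  intro u _
  by_cases he : D.edge v b u = true
  · rw [if_pos he, if_pos he, Finset.sum_image (by intro x _ y _ h; injection h),
      nodeFun_eq_sum, Finset.mul_sum]
    apply Finset.sum_congr rfl
    intro p _
    rfl
  · rw [if_neg he, if_neg he, Finset.sum_empty]

/-- The number of nodes at level `r`. -/
noncomputable def levelCard (D : NdEVDD K n) (r : ℕ) : ℕ :=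
  Fintype.card {v : D.V // D.level v = r}

/-- An enumeration of the nodes at level `r`. -/
noncomputable def levelEquiv (D : NdEVDD K n) (r : ℕ) :
    Fin (D.levelCard r) ≃ {v : D.V // D.level v = r} :=
  (Fintype.equivFin _).symm

/-- The tensor-train tensors extracted from the diagram. -/
noncomputable def ttA [CommSemiring K] (D : NdEVDD K n) : ℕ → ℕ → ℕ → Bool → K :=
  fun r s t b =>
    if h : s < D.levelCard r ∧ t < D.levelCard (r + 1) then
      (if D.edge (D.levelEquiv r ⟨s, h.1⟩).val b (D.levelEquiv (r + 1) ⟨t, h.2⟩).val = true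
        then D.w (D.levelEquiv r ⟨s, h.1⟩).val b (D.levelEquiv (r + 1) ⟨t, h.2⟩).val else 0)
    else 0

lemma level_zero_eq_source (D : NdEVDD K n) {v : D.V} (hv : D.level v = 0) : v = D.source := by
  by_contra h
  obtain ⟨u, b, he⟩ := D.single_source v h
  have := D.edge_level u b v he
  omega

lemma level_n_eq_sink (D : NdEVDD K n) {v : D.V} (hv : D.level v = n) : v = D.sink := by
  by_contra h
  have := D.nonsink_level v h
  omega

lemma levelCard_zero (D : NdEVDD K n) (hD : D.Complete) : D.levelCard 0 = 1 :=
  Fintype.card_eq_one_iff.mpr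
    ⟨⟨D.source, hD.1⟩, fun y => Subtype.ext (D.level_zero_eq_source y.2)⟩

lemma levelCard_n (D : NdEVDD K n) : D.levelCard n = 1 :=
  Fintype.card_eq_one_iff.mpr
    ⟨⟨D.sink, D.sink_level⟩, fun y => Subtype.ext (D.level_n_eq_sink y.2)⟩

lemma ttSuffix_eq [CommSemiring K] (D : NdEVDD K n) (hD : D.Complete) (α : ℕ → Bool) :
    ∀ k, k ≤ n → ∀ s (hs : s < D.levelCard (n - k)),
      ttSuffix n D.levelCard D.ttA α k s
        = D.nodeFun α (D.levelEquiv (n - k) ⟨s, hs⟩).val := by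
  intro k
  induction k with
  | zero =>
      intro _ s hs
      have h1 : D.levelCard (n - 0) = 1 := by simpa using D.levelCard_n
      have hs0 : s = 0 := by omega
      have hsink : (D.levelEquiv (n - 0) ⟨s, hs⟩).val = D.sink := by
        apply D.level_n_eq_sink
        have := (D.levelEquiv (n - 0) ⟨s, hs⟩).property
        simpa using this
      rw [hsink, D.nodeFun_sink, ttSuffix, if_pos hs0]
  | succ k ih =>
      intro hk s hs
      have hk' : k ≤ n := by omega
      have hr : n - k = (n - (k + 1)) + 1 := by omega
      set r := n - (k + 1) with hrdef
      set v := (D.levelEquiv r ⟨s, hs⟩).val with hv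
      have hlev : D.level v = r := (D.levelEquiv r ⟨s, hs⟩).property
      have hrn : r < n := by omega
      have hvs : v ≠ D.sink := by
        intro h
        rw [h, D.sink_level] at hlev
        omega
      have ih' : ∀ t (ht : t < D.levelCard (r + 1)),
          ttSuffix n D.levelCard D.ttA α k t
            = D.nodeFun α ((D.levelEquiv (r + 1)) ⟨t, ht⟩).val := by
        rw [← hr]
        exact ih hk'
      rw [ttSuffix, D.nodeFun_succ α hvs, hlev]
      have hzero : ∀ u : D.V, D.level u ≠ r + 1 →
          (if D.edge v (α r) u = true then D.w v (α r) u * D.nodeFun α u else 0) = 0 := by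
        intro u hu
        rw [if_neg]
        intro he
        exact hu (by rw [hD.2 v _ u he, hlev])
      classical
      have step1 : ∑ u : D.V,
            (if D.edge v (α r) u = true then D.w v (α r) u * D.nodeFun α u else 0)
          = ∑ u ∈ Finset.univ.filter (fun u => D.level u = r + 1),
            (if D.edge v (α r) u = true then D.w v (α r) u * D.nodeFun α u else 0) :=
        (Finset.sum_filter_of_ne (fun u _ h => by
          by_contra hne; exact h (hzero u hne))).symm
      have step2 : ∑ u ∈ Finset.univ.filter (fun u => D.level u = r + 1),
            (if D.edge v (α r) u = true then D.w v (α r) u * D.nodeFun α u else 0)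
          = ∑ u : {u : D.V // D.level u = r + 1},
            (if D.edge v (α r) u.val = true then D.w v (α r) u.val * D.nodeFun α u.val else 0) :=
        Finset.sum_subtype _ (by simp) _
      have step3 : ∑ u : {u : D.V // D.level u = r + 1},
            (if D.edge v (α r) u.val = true then D.w v (α r) u.val * D.nodeFun α u.val else 0)
          = ∑ i : Fin (D.levelCard (r + 1)),
            (if D.edge v (α r) (D.levelEquiv (r + 1) i).val = true
              then D.w v (α r) (D.levelEquiv (r + 1) i).val
                * D.nodeFun α (D.levelEquiv (r + 1) i).val else 0) :=
        (Equiv.sum_comp (D.levelEquiv (r + 1)) _).symm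
      rw [step1, step2, step3, hr, ← Fin.sum_univ_eq_sum_range
        (fun t => D.ttA r s t (α r) * ttSuffix n D.levelCard D.ttA α k t)
        (D.levelCard (r + 1))]
      apply Finset.sum_congr rfl
      intro i _
      have hi : (i : ℕ) < D.levelCard (r + 1) := i.isLt
      rw [ih' i hi]
      show D.ttA r s i (α r) * _ = _
      rw [ttA, dif_pos ⟨hs, hi⟩]
      simp only [Fin.eta]
      by_cases he : D.edge v (α r) (D.levelEquiv (r + 1) i).val = true
      · rw [if_pos he, if_pos (by exact he)]
      · rw [if_neg he, if_neg (by exact he), zero_mul]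

end NdEVDD

/-- from a complete ordered nd-EVDD to a tensor train whose bond dimensions
count the nodes at each level. -/
theorem ndEVDD_to_tt {K : Type} [CommSemiring K] (n : ℕ) (hn : 1 ≤ n)
    (D : NdEVDD K n) (hD : D.Complete) :
    ∃ (χ : ℕ → ℕ) (A : ℕ → ℕ → ℕ → Bool → K)
      (node : ∀ r : Fin (n + 1), Fin (χ r.val) ≃ {v : D.V // D.level v = r.val}),
      χ 0 = 1 ∧ χ n = 1 ∧
      (∀ (r : Fin n) (s : Fin (χ r.val)) (t : Fin (χ (r.val + 1))) (b : Bool),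
        A r.val s t b =
          if D.edge (node r.castSucc s).val b (node r.succ t).val = true then
            D.w (node r.castSucc s).val b (node r.succ t).val
          else 0) ∧
      (∀ α : ℕ → Bool, ttFun n χ A α = D.eval α) := by
  classical
  refine ⟨D.levelCard, D.ttA, fun r => D.levelEquiv r.val, D.levelCard_zero hD,
    D.levelCard_n, ?_, ?_⟩
  · intro r s t b
    show D.ttA r.val s.val t.val b = _
    rw [NdEVDD.ttA, dif_pos ⟨s.isLt, t.isLt⟩]
    simp only [Fin.eta]
    rfl
  · intro α
    have h0 : (0 : ℕ) < D.levelCard (n - n) := by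
      rw [Nat.sub_self, D.levelCard_zero hD]; omega
    have := D.ttSuffix_eq hD α n le_rfl 0 h0
    rw [ttFun, this]
    have hsrc : (D.levelEquiv (n - n) ⟨0, h0⟩).val = D.source := by
      apply D.level_zero_eq_source
      have := (D.levelEquiv (n - n) ⟨0, h0⟩).property
      simpa using this
    rw [hsrc]
    rfl
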